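/- Let p > 2 be a real number. For all u ∈ [0,1], one has ((1+u)^p + (1−u)^p)/(2(1+u^p)) ≥ 1 + (2^{p−2} − 1)·u^p. -/
import Mathlib

open Set Real

/-- derivative helper: at each `t > 1`, `G` has the expected derivative. -/
private lemma G_hasDeriv (p : ℝ) (hp : 2 < p) {t : ℝ} (ht : 1 < t) :
    HasDerivAt (fun t : ℝ => (t+1)^p + (t-1)^p - 2*t^p)
      (1 * p * (t+1)^(p-1) + 1 * p * (t-1)^(p-1) - 2 * (1 * p * t^(p-1))) t := by
  have h1 : HasDerivAt (fun t : ℝ => (t+1)^p) (1 * p * (t+1)^(p-1)) t :=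
    ((hasDerivAt_id t).add_const 1).rpow_const (Or.inl (by simp only [id_eq]; intro h; linarith))
  have h2 : HasDerivAt (fun t : ℝ => (t-1)^p) (1 * p * (t-1)^(p-1)) t :=
    ((hasDerivAt_id t).sub_const 1).rpow_const (Or.inl (by simp only [id_eq]; intro h; linarith))
  have h3 : HasDerivAt (fun t : ℝ => t^p) (1 * p * t^(p-1)) t :=
    (hasDerivAt_id t).rpow_const (Or.inl (by simp only [id_eq]; intro h; linarith))
  exact (h1.add h2).sub (h3.const_mul 2)

private lemma G_mono (p : ℝ) (hp : 2 < p) :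
    MonotoneOn (fun t : ℝ => (t+1)^p + (t-1)^p - 2*t^p) (Set.Ici 1) := by
  have hp0 : 0 ≤ p := by linarith
  apply monotoneOn_of_deriv_nonneg (convex_Ici 1)
  · apply ContinuousOn.sub
    · apply ContinuousOn.add
      · exact (continuousOn_id.add continuousOn_const).rpow_const
          (fun x hx => Or.inr hp0)
      · exact (continuousOn_id.sub continuousOn_const).rpow_const
          (fun x hx => Or.inr hp0)
    · exact continuousOn_const.mul (continuousOn_id.rpow_const (fun x hx => Or.inr hp0))
  · intro t ht
    rw [interior_Ici] at ht
    exact (G_hasDeriv p hp ht).differentiableAt.differentiableWithinAt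
  · intro t ht
    rw [interior_Ici] at ht
    have ht' : 1 < t := ht
    rw [(G_hasDeriv p hp ht').deriv]
    have hconv := convexOn_rpow (p := p - 1) (by linarith)
    have key : t ^ (p-1) ≤ (1/2) * (t-1)^(p-1) + (1/2) * (t+1)^(p-1) := by
      have := hconv.2 (show (t-1 : ℝ) ∈ Ici 0 from by simp only [mem_Ici]; linarith)
        (show (t+1 : ℝ) ∈ Ici 0 from by simp only [mem_Ici]; linarith)
        (by norm_num : (0:ℝ) ≤ 1/2) (by norm_num : (0:ℝ) ≤ 1/2) (by norm_num)
      simp only [smul_eq_mul] at this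
      calc t ^ (p-1) = (1/2 * (t-1) + 1/2 * (t+1)) ^ (p-1) := by rw [show (1/2 * (t-1) + 1/2 * (t+1) : ℝ) = t by ring]
        _ ≤ 1/2 * (t-1)^(p-1) + 1/2 * (t+1)^(p-1) := this
    nlinarith

/-- Key inequality: `(1+u)^p + (1-u)^p ≥ 2 + (2^p - 2) u^p`. -/
private lemma key_ineq (p : ℝ) (hp : 2 < p) {u : ℝ} (hu0 : 0 < u) (hu1 : u ≤ 1) :
    2 + ((2:ℝ)^p - 2) * u^p ≤ (1+u)^p + (1-u)^p := by
  have hu0' : u ≠ 0 := ne_of_gt hu0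
  have ht : (1:ℝ) ≤ 1/u := by
    rw [le_div_iff₀ hu0]; linarith
  have := G_mono p hp (self_mem_Ici) (show (1/u : ℝ) ∈ Ici 1 from ht) ht
  simp only at this
  have hup : (0:ℝ) ≤ u ^ p := Real.rpow_nonneg hu0.le p
  have hmul := mul_le_mul_of_nonneg_left this hup
  have e1 : u^p * ((1/u+1)^p) = (1+u)^p := by
    rw [← Real.mul_rpow hu0.le (by positivity)]
    have : u * (1/u + 1) = 1 + u := by field_simp
    rw [this]
  have e2 : u^p * ((1/u-1)^p) = (1-u)^p := by
    rw [← Real.mul_rpow hu0.le (by rw [sub_nonneg]; exact (le_div_iff₀ hu0).mpr (by linarith))]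
    have : u * (1/u - 1) = 1 - u := by field_simp
    rw [this]
  have e3 : u^p * ((1/u)^p) = 1 := by
    rw [← Real.mul_rpow hu0.le (by positivity)]
    rw [mul_one_div_cancel hu0', Real.one_rpow]
  have e4 : u^p * ((1+1:ℝ)^p + (1-1:ℝ)^p - 2*(1:ℝ)^p)
      = ((2:ℝ)^p - 2) * u^p := by
    rw [show ((1:ℝ)+1) = 2 by norm_num, show ((1:ℝ)-1) = 0 by norm_num,
      Real.zero_rpow (by linarith : p ≠ 0), Real.one_rpow]
    ring
  calc 2 + ((2:ℝ)^p - 2) * u^p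
      = 2 + u^p * ((1+1:ℝ)^p + (1-1:ℝ)^p - 2*(1:ℝ)^p) := by rw [e4]
    _ ≤ 2 + u^p * ((1/u+1)^p + (1/u-1)^p - 2*(1/u)^p) := by linarith [hmul]
    _ = (1+u)^p + (1-u)^p := by linear_combination e1 + e2 - 2*e3

theorem stmt_5 (p : ℝ) (hp : 2 < p) (u : ℝ) (hu : u ∈ Set.Icc (0:ℝ) 1) :
    ((1 + u) ^ p + (1 - u) ^ p) / (2 * (1 + u ^ p)) ≥ 1 + ((2:ℝ) ^ (p - 2) - 1) * u ^ p := by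
  obtain ⟨hu0, hu1⟩ := hu
  rcases eq_or_lt_of_le hu0 with h | h
  · rw [← h]
    rw [Real.zero_rpow (by linarith : p ≠ 0)]
    norm_num
  · have hkey := key_ineq p hp h hu1
    have hX0 : (0:ℝ) ≤ u ^ p := Real.rpow_nonneg hu0 p
    have hX1 : u ^ p ≤ 1 := Real.rpow_le_one hu0 hu1 (by linarith)
    have hA : (1:ℝ) ≤ (2:ℝ)^(p-2) := Real.one_le_rpow (by norm_num) (by linarith)
    have h4 : (2:ℝ)^(2:ℝ) = 4 := by
      rw [show (2:ℝ) = ((2:ℕ):ℝ) from by norm_num, Real.rpow_natCast]; norm_num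
    have h2p : (2:ℝ)^p = (2:ℝ)^(p-2) * 4 := by
      rw [← h4, ← Real.rpow_add (by norm_num : (0:ℝ) < 2)]
      norm_num
    rw [ge_iff_le, le_div_iff₀ (by positivity)]
    nlinarith [mul_nonneg (sub_nonneg.2 hA) (mul_nonneg hX0 (sub_nonneg.2 hX1))]
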